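/- In knapsack Instance 1, the number of infeasible solutions of type x_vio1 equals C(n/2, αn/2)·(n/2 − 1), which is at least ((n−1)/2)·(1/α)^(αn/2). -/

import Mathlib

open Finset

/-- Value of item `i` in knapsack Instance 1. -/
noncomputable def v1 (α : ℝ) (n : ℕ) (i : ℕ) : ℝ :=
  if i = 1 then n else if i ≤ n / 2 + 1 then 1 else α ^ Real.log n

/-- Weight of item `i` in knapsack Instance 1. -/
noncomputable def w1 (α : ℝ) (n : ℕ) (i : ℕ) : ℝ :=
  if i = 1 then n else if i ≤ n / 2 + 1 then 2 / α else α ^ (2 * Real.log n)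

/-- Objective value of a knapsack `x` in Instance 1. -/
noncomputable def f1 (α : ℝ) (n : ℕ) (x : Finset ℕ) : ℝ := ∑ i ∈ x, v1 α n i

/-- Total weight of a knapsack `x` in Instance 1. -/
noncomputable def wt1 (α : ℝ) (n : ℕ) (x : Finset ℕ) : ℝ := ∑ i ∈ x, w1 α n i

/-- Feasibility in Instance 1: total weight at most the capacity `W = n`. -/
def feasible1 (α : ℝ) (n : ℕ) (x : Finset ℕ) : Prop := wt1 α n x ≤ n


lemma aux_desc (j : ℕ) : ∀ K m : ℕ, j ≤ K → K ≤ m →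
    m ^ j * K.descFactorial j ≤ m.descFactorial j * K ^ j := by
  induction j with
  | zero => intro K m _ _; simp
  | succ j ih =>
    intro K m hjK hKm
    rw [Nat.descFactorial_succ, Nat.descFactorial_succ, pow_succ, pow_succ]
    have h1 := ih K m (Nat.le_of_succ_le hjK) hKm
    have hterm : m * (K - j) ≤ (m - j) * K := by
      rw [Nat.mul_sub, Nat.sub_mul]
      have h2 : j * K ≤ m * j := by rw [Nat.mul_comm m j]; exact Nat.mul_le_mul_left _ hKm
      exact Nat.sub_le_sub_left h2 _
    calc m ^ j * m * ((K - j) * K.descFactorial j)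
        = (m * (K - j)) * (m ^ j * K.descFactorial j) := by ring
      _ ≤ ((m - j) * K) * (m.descFactorial j * K ^ j) := Nat.mul_le_mul hterm h1
      _ = (m - j) * m.descFactorial j * (K ^ j * K) := by ring

lemma aux_choose (j m : ℕ) (h : j + 1 ≤ m) :
    m ^ j * (m - j) ≤ m.choose (j + 1) * (j + 1) ^ j := by
  have h0 := aux_desc j (j + 1) m (Nat.le_succ j) h
  have hd : (j + 1).descFactorial j = Nat.factorial (j + 1) := by
    have h1 := Nat.descFactorial_succ (j + 1) j
    rw [Nat.descFactorial_self] at h1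
    simpa using h1.symm
  rw [hd] at h0
  apply Nat.le_of_mul_le_mul_right _ (Nat.factorial_pos (j + 1))
  calc m ^ j * (m - j) * Nat.factorial (j + 1)
      = (m - j) * (m ^ j * Nat.factorial (j + 1)) := by ring
    _ ≤ (m - j) * (m.descFactorial j * (j + 1) ^ j) := Nat.mul_le_mul_left _ h0
    _ = ((m - j) * m.descFactorial j) * (j + 1) ^ j := by ring
    _ = m.descFactorial (j + 1) * (j + 1) ^ j := by rw [Nat.descFactorial_succ]
    _ = m.choose (j + 1) * (j + 1) ^ j * Nat.factorial (j + 1) := by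
        rw [Nat.descFactorial_eq_factorial_mul_choose]; ring

/-- In knapsack Instance 1, the number of infeasible solutions of type `x_vio1`
(exactly `αn/2 = k` ones in `I` and exactly one 1 in `J`) equals
`C(n/2, k)·(n/2 − 1)`, which is at least `((n−1)/2)·(1/α)^k`. -/
theorem stmt6 (α : ℝ) (n : ℕ) (hα : α ∈ Set.Ioo (0 : ℝ) 1) (heven : 2 ∣ n)
    (k : ℕ) (hk0 : 0 < k) (hk : (k : ℝ) = α * n / 2)
    (h1 : (n : ℝ) > 2 / α) (h2 : 2 / α > (n : ℝ) * α ^ (2 * Real.log n) / 2) :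
    (((Finset.Icc 1 n).powerset.filter (fun x =>
        x ⊆ Finset.Icc 2 (n / 2 + 1) ∪ Finset.Icc (n / 2 + 2) n ∧
        (x ∩ Finset.Icc 2 (n / 2 + 1)).card = k ∧
        (x ∩ Finset.Icc (n / 2 + 2) n).card = 1)).card
      = (n / 2).choose k * (n / 2 - 1)) ∧
    (((n : ℝ) - 1) / 2 * (1 / α) ^ k ≤ (((n / 2).choose k * (n / 2 - 1) : ℕ) : ℝ)) := by
  obtain ⟨hα0, hα1⟩ := hα
  obtain ⟨m, rfl⟩ := heven
  have hn2 : 2 * m / 2 = m := Nat.mul_div_cancel_left m (by norm_num)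
  simp only [hn2]
  -- basic bounds
  have hkm : (k : ℝ) = α * m := by push_cast at hk; linarith
  have hmpos : 0 < (m : ℝ) := by
    by_contra hcon
    push_neg at hcon
    have : (0:ℝ) < 2 / α := by positivity
    push_cast at h1
    linarith
  have hk2 : 2 ≤ k := by
    have hgt : (1 : ℝ) < k := by
      rw [gt_iff_lt, div_lt_iff₀ hα0] at h1
      push_cast at h1
      nlinarith
    exact_mod_cast hgt
  have hkltm : k < m := by
    have : (k : ℝ) < m := by nlinarith
    exact_mod_cast this
  have hm3 : 3 ≤ m := by omega
  -- sets
  set I : Finset ℕ := Finset.Icc 2 (m + 1) with hI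
  set J : Finset ℕ := Finset.Icc (m + 2) (2 * m) with hJ
  have hcardI : I.card = m := by rw [hI, Nat.card_Icc]; omega
  have hcardJ : J.card = m - 1 := by rw [hJ, Nat.card_Icc]; omega
  have hdisIJ : Disjoint I J := by
    rw [Finset.disjoint_left]
    intro a ha hb
    rw [hI, mem_Icc] at ha; rw [hJ, mem_Icc] at hb; omega
  have hsubIJ : I ∪ J ⊆ Finset.Icc 1 (2 * m) := by
    intro a ha
    rw [mem_union, hI, hJ, mem_Icc, mem_Icc] at ha
    rw [mem_Icc]; omega
  have hinterI : ∀ a b : Finset ℕ, a ⊆ I → b ⊆ J → (a ∪ b) ∩ I = a := by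
    intro a b ha hb
    rw [Finset.union_inter_distrib_right, Finset.inter_eq_left.mpr ha,
      Finset.disjoint_iff_inter_eq_empty.mp (hdisIJ.symm.mono_left hb), union_empty]
  have hinterJ : ∀ a b : Finset ℕ, a ⊆ I → b ⊆ J → (a ∪ b) ∩ J = b := by
    intro a b ha hb
    rw [Finset.union_inter_distrib_right, Finset.inter_eq_left.mpr hb,
      Finset.disjoint_iff_inter_eq_empty.mp (hdisIJ.mono_left ha), empty_union]
  constructor
  · -- the counting part
    rw [Finset.card_nbij' (fun x => (x ∩ I, x ∩ J)) (fun p => p.1 ∪ p.2)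
      (t := (I.powersetCard k) ×ˢ (J.powersetCard 1))]
    · rw [Finset.card_product, Finset.card_powersetCard, Finset.card_powersetCard,
        hcardI, hcardJ, Nat.choose_one_right]
    · intro x hx
      simp only [Finset.mem_coe, mem_filter, mem_powerset] at hx
      obtain ⟨-, hsub, hcI, hcJ⟩ := hx
      simp only [Finset.mem_coe, Finset.mem_product, Finset.mem_powersetCard]
      exact ⟨⟨inter_subset_right, hcI⟩, ⟨inter_subset_right, hcJ⟩⟩
    · intro p hp
      simp only [Finset.mem_coe, Finset.mem_product, Finset.mem_powersetCard] at hp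
      obtain ⟨⟨ha, hca⟩, ⟨hb, hcb⟩⟩ := hp
      have hsub : p.1 ∪ p.2 ⊆ I ∪ J := union_subset_union ha hb
      simp only [Finset.mem_coe, mem_filter, mem_powerset]
      refine ⟨hsub.trans hsubIJ, hsub, ?_, ?_⟩
      · rw [hinterI p.1 p.2 ha hb]; exact hca
      · rw [hinterJ p.1 p.2 ha hb]; exact hcb
    · intro x hx
      simp only [Finset.mem_coe, mem_filter, mem_powerset] at hx
      obtain ⟨-, hsub, -, -⟩ := hx
      show x ∩ I ∪ x ∩ J = x
      rw [← Finset.inter_union_distrib_left, Finset.inter_eq_left.mpr hsub]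
    · intro p hp
      simp only [Finset.mem_coe, Finset.mem_product, Finset.mem_powersetCard] at hp
      obtain ⟨⟨ha, -⟩, ⟨hb, -⟩⟩ := hp
      ext1
      · exact hinterI p.1 p.2 ha hb
      · exact hinterJ p.1 p.2 ha hb
  · -- the inequality part
    obtain ⟨j, rfl⟩ : ∃ j, k = j + 1 := ⟨k - 1, by omega⟩
    have hnat := aux_choose j m (by omega)
    have hC0 : (0 : ℝ) ≤ (m.choose (j + 1) : ℝ) := by positivity
    have hr : (m : ℝ) ^ j * ((m : ℝ) - j) ≤ (m.choose (j + 1) : ℝ) * ((j : ℝ) + 1) ^ j := by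
      have hjm : j ≤ m := by omega
      exact_mod_cast hnat
    have hjr1 : (1 : ℝ) ≤ (j : ℝ) := by exact_mod_cast (by omega : 1 ≤ j)
    have hjm : (j : ℝ) + 1 ≤ (m : ℝ) - 1 := by
      have h' : j + 2 ≤ m := by omega
      have h'' : (j : ℝ) + 2 ≤ (m : ℝ) := by exact_mod_cast h'
      linarith
    have hM3 : (3 : ℝ) ≤ (m : ℝ) := by exact_mod_cast hm3
    have hainv : 1 / α = (m : ℝ) / ((j : ℝ) + 1) := by
      have hj1 : ((j : ℝ) + 1) ≠ 0 := by positivity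
      rw [eq_div_iff hj1, one_div]
      rw [show ((j : ℝ) + 1) = α * m by push_cast at hkm ⊢; linarith]
      field_simp
    have hcast : (((m.choose (j + 1)) * (m - 1) : ℕ) : ℝ)
        = (m.choose (j + 1) : ℝ) * ((m : ℝ) - 1) := by
      push_cast [Nat.cast_sub (by omega : 1 ≤ m)]; ring
    rw [hcast, hainv]
    have hj1pos : (0 : ℝ) < ((j : ℝ) + 1) ^ (j + 1) := by positivity
    push_cast
    rw [div_pow, div_mul_div_comm, div_le_iff₀ (by positivity)]
    have hq : (2 * (m : ℝ) - 1) * (m : ℝ)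
        ≤ 2 * ((j : ℝ) + 1) * ((m : ℝ) - (j : ℝ)) * ((m : ℝ) - 1) := by
      nlinarith [mul_nonneg (by linarith : (0:ℝ) ≤ (j : ℝ) + 1 - 2)
          (by linarith : (0:ℝ) ≤ (m : ℝ) - 1 - ((j : ℝ) + 1)),
        mul_nonneg (mul_nonneg (by linarith : (0:ℝ) ≤ (j : ℝ) + 1 - 2)
          (by linarith : (0:ℝ) ≤ (m : ℝ) - 1 - ((j : ℝ) + 1))) (by linarith : (0:ℝ) ≤ (m:ℝ) - 1),
        sq_nonneg ((m : ℝ) - 3)]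
    calc (2 * (m : ℝ) - 1) * (m : ℝ) ^ (j + 1)
        = ((2 * (m : ℝ) - 1) * (m : ℝ)) * (m : ℝ) ^ j := by ring
      _ ≤ (2 * ((j : ℝ) + 1) * ((m : ℝ) - (j : ℝ)) * ((m : ℝ) - 1)) * (m : ℝ) ^ j := by
          apply mul_le_mul_of_nonneg_right hq (by positivity)
      _ = (2 * ((j : ℝ) + 1) * ((m : ℝ) - 1)) * ((m : ℝ) ^ j * ((m : ℝ) - (j : ℝ))) := by ring
      _ ≤ (2 * ((j : ℝ) + 1) * ((m : ℝ) - 1)) *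
            ((m.choose (j + 1) : ℝ) * ((j : ℝ) + 1) ^ j) := by
          apply mul_le_mul_of_nonneg_left hr
          nlinarith
      _ = (m.choose (j + 1) : ℝ) * ((m : ℝ) - 1) * (2 * ((j : ℝ) + 1) ^ (j + 1)) := by ring
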